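/- Virial theorem for bounded solutions: let q(t) be a solution of Newton's N-body equations defined for all t ∈ ℝ with sup_{t ∈ ℝ} I(t) < ∞. Then the time averages ⟨K⟩ = lim_{T→∞} (1/(2T))∫_{−T}^{T} K(t) dt and ⟨U⟩ = lim_{T→∞} (1/(2T))∫_{−T}^{T} U(q(t)) dt exist, satisfy 2⟨K⟩ = ⟨U⟩ = −2E, and the total energy E is strictly negative. -/

import Mathlib

open Finset Filter MeasureTheory
open scoped RealInnerProductSpace

noncomputable section

/-- Configuration space of `N` bodies in `ℝ³`. -/
abbrev Config (N : ℕ) := Fin N → EuclideanSpace ℝ (Fin 3)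

/-- A configuration is collision-free if all bodies occupy distinct positions. -/
def CollisionFree {N : ℕ} (q : Config N) : Prop :=
  ∀ a b : Fin N, a ≠ b → q a ≠ q b

/-- The Newtonian potential `U(q) = G ∑_{a<b} m_a m_b / |q_a - q_b|`. -/
def potU {N : ℕ} (G : ℝ) (m : Fin N → ℝ) (q : Config N) : ℝ :=
  G * ∑ a : Fin N, ∑ b : Fin N, if a < b then m a * m b / ‖q a - q b‖ else 0

/-- Kinetic energy `K = (1/2) ∑_a m_a |v_a|²`. -/
def kinE {N : ℕ} (m : Fin N → ℝ) (v : Config N) : ℝ :=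
  (1 / 2) * ∑ a : Fin N, m a * ‖v a‖ ^ 2

/-- Moment of inertia `I = ∑_a m_a |q_a|²`. -/
def momI {N : ℕ} (m : Fin N → ℝ) (q : Config N) : ℝ :=
  ∑ a : Fin N, m a * ‖q a‖ ^ 2

/-- `q, v : ℝ → Config N` is a solution of Newton's N-body equations on `J`:
at each time in `J` the configuration is collision-free, `v` is the derivative
of `q`, and the acceleration satisfies
`m_a q̈_a = G ∑_{b ≠ a} m_a m_b (q_b - q_a)/|q_b - q_a|³`. -/
def IsSolutionOn {N : ℕ} (G : ℝ) (m : Fin N → ℝ) (J : Set ℝ)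
    (q v : ℝ → Config N) : Prop :=
  ∀ t ∈ J,
    CollisionFree (q t) ∧
    (∀ a, HasDerivAt (fun s => q s a) (v t a) t) ∧
    (∀ a, ∃ acc : EuclideanSpace ℝ (Fin 3),
      HasDerivAt (fun s => v s a) acc t ∧
      m a • acc = ∑ b ∈ univ.filter (fun b => b ≠ a),
        (G * m a * m b / ‖q t b - q t a‖ ^ 3) • (q t b - q t a))

section Aux

lemma bounded_deriv_of_bounded (f g h : ℝ → ℝ) (c M : ℝ) (hc : 0 ≤ c)
    (hf : ∀ t, HasDerivAt f (g t) t) (hg : ∀ t, HasDerivAt g (h t) t)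
    (hh : ∀ t, -c ≤ h t) (hf0 : ∀ t, 0 ≤ f t) (hfM : ∀ t, f t ≤ M) :
    ∀ t, |g t| ≤ M + c := by
  have hgc : Continuous g :=
    continuous_iff_continuousAt.2 fun t => (hg t).differentiableAt.continuousAt
  have hgint : ∀ a b : ℝ, IntervalIntegrable g volume a b := fun a b =>
    hgc.intervalIntegrable a b
  have hftc : ∀ a b : ℝ, ∫ s in a..b, g s = f b - f a := fun a b =>
    intervalIntegral.integral_eq_sub_of_hasDerivAt (fun x _ => hf x) (hgint a b)
  have hmono : Monotone (fun t => g t + c * t) := by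
    have hd : ∀ t, HasDerivAt (fun t => g t + c * t) (h t + c) t := by
      intro t
      have h2 : HasDerivAt (fun t : ℝ => c * t) c t := by
        simpa using (hasDerivAt_id t).const_mul c
      exact (hg t).add h2
    apply monotone_of_deriv_nonneg
    · exact fun t => ((hd t).differentiableAt : DifferentiableAt ℝ _ t)
    · intro t
      rw [(hd t).deriv]
      linarith [hh t]
  intro t
  rw [abs_le]
  constructor
  · have key : ∫ s in (t-1)..t, g s ≤ g t + c := by
      have h1 : ∫ s in (t-1)..t, g s ≤ ∫ s in (t-1)..t, (g t + c) := by
        apply intervalIntegral.integral_mono_on (by linarith) (hgint _ _)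
          ((continuous_const).intervalIntegrable _ _)
        intro s hs
        have h2 := hmono hs.2
        simp only at h2
        nlinarith [hs.1, hs.2]
      have h3 : ∫ s in (t-1)..t, (g t + c : ℝ) = g t + c := by
        rw [intervalIntegral.integral_const]; ring_nf
      linarith
    rw [hftc] at key
    linarith [hf0 t, hfM (t-1)]
  · have key : g t - c ≤ ∫ s in t..(t+1), g s := by
      have h1 : ∫ s in t..(t+1), (g t - c : ℝ) ≤ ∫ s in t..(t+1), g s := by
        apply intervalIntegral.integral_mono_on (by linarith)
          ((continuous_const).intervalIntegrable _ _) (hgint _ _)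
        intro s hs
        have h2 := hmono hs.1
        simp only at h2
        nlinarith [hs.1, hs.2]
      have h3 : ∫ s in t..(t+1), (g t - c : ℝ) = g t - c := by
        rw [intervalIntegral.integral_const]; ring_nf
      linarith
    rw [hftc] at key
    linarith [hf0 t, hfM (t+1)]

lemma potU_eq_half {N : ℕ} (G : ℝ) (m : Fin N → ℝ) (q : Config N) :
    potU G m q = (1/2) * ∑ a : Fin N, ∑ b : Fin N,
      (if a ≠ b then G * m a * m b / ‖q a - q b‖ else 0) := by
  have hsplit : ∀ a b : Fin N,
      (if a ≠ b then G * m a * m b / ‖q a - q b‖ else 0)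
      = (if a < b then G * m a * m b / ‖q a - q b‖ else 0)
        + (if b < a then G * m a * m b / ‖q a - q b‖ else 0) := by
    intro a b
    rcases lt_trichotomy a b with h | h | h
    · simp [h, h.ne, h.not_gt, (h.ne).symm]
    · simp [h]
    · simp [h, h.ne', h.not_gt]
  have hswap : ∑ a : Fin N, ∑ b : Fin N, (if b < a then G * m a * m b / ‖q a - q b‖ else 0)
      = ∑ a : Fin N, ∑ b : Fin N, (if a < b then G * m a * m b / ‖q a - q b‖ else 0) := by
    rw [Finset.sum_comm]
    refine Finset.sum_congr rfl fun a _ => Finset.sum_congr rfl fun b _ => ?_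
    rcases lt_or_ge a b with h | h
    · rw [if_pos h, if_pos h, norm_sub_rev]; ring
    · rw [if_neg h.not_gt, if_neg h.not_gt]
  simp only [hsplit, Finset.sum_add_distrib, hswap]
  unfold potU
  rw [Finset.mul_sum]
  simp only [Finset.mul_sum, mul_ite, mul_zero]
  ring_nf

lemma pair_inner_eq {x y : EuclideanSpace ℝ (Fin 3)} (hxy : x ≠ y) (c : ℝ) :
    (c / ‖y - x‖ ^ 3) * ⟪x, y - x⟫ + (c / ‖x - y‖ ^ 3) * ⟪y, x - y⟫
      = -(c / ‖x - y‖) := by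
  have hr : ‖x - y‖ ≠ 0 := norm_ne_zero_iff.2 (sub_ne_zero.2 hxy)
  have hkey : ⟪x, y - x⟫ + ⟪y, x - y⟫ = -‖x - y‖ ^ 2 := by
    rw [← real_inner_self_eq_norm_sq]
    simp only [inner_sub_left, inner_sub_right]
    rw [real_inner_comm x y]
    ring
  rw [norm_sub_rev y x]
  have h2 : (c / ‖x - y‖ ^ 3) * ⟪x, y - x⟫ + (c / ‖x - y‖ ^ 3) * ⟪y, x - y⟫
      = (c / ‖x - y‖ ^ 3) * (⟪x, y - x⟫ + ⟪y, x - y⟫) := by ring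
  rw [h2, hkey]
  field_simp

lemma virial_inner_eq {N : ℕ} (G : ℝ) (m : Fin N → ℝ) (q : Config N)
    (hcf : CollisionFree q) :
    ∑ a : Fin N, ⟪q a, ∑ b ∈ univ.filter (fun b => b ≠ a),
        (G * m a * m b / ‖q b - q a‖ ^ 3) • (q b - q a)⟫ = - potU G m q := by
  have hLHS : (∑ a : Fin N, ⟪q a, ∑ b ∈ univ.filter (fun b => b ≠ a),
        (G * m a * m b / ‖q b - q a‖ ^ 3) • (q b - q a)⟫)
      = ∑ a : Fin N, ∑ b : Fin N,
        (if b ≠ a then (G * m a * m b / ‖q b - q a‖ ^ 3) * ⟪q a, q b - q a⟫ else 0) := by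
    refine Finset.sum_congr rfl fun a _ => ?_
    rw [inner_sum, Finset.sum_filter]
    refine Finset.sum_congr rfl fun b _ => ?_
    split
    · rw [real_inner_smul_right]
    · rfl
  rw [hLHS]
  have hcopy : (∑ a : Fin N, ∑ b : Fin N,
        (if b ≠ a then (G * m a * m b / ‖q b - q a‖ ^ 3) * ⟪q a, q b - q a⟫ else 0))
      = ∑ a : Fin N, ∑ b : Fin N,
        (if a ≠ b then (G * m b * m a / ‖q a - q b‖ ^ 3) * ⟪q b, q a - q b⟫ else 0) :=
    Finset.sum_comm
  have h2 : (∑ a : Fin N, ∑ b : Fin N,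
        (if b ≠ a then (G * m a * m b / ‖q b - q a‖ ^ 3) * ⟪q a, q b - q a⟫ else 0))
      + (∑ a : Fin N, ∑ b : Fin N,
        (if b ≠ a then (G * m a * m b / ‖q b - q a‖ ^ 3) * ⟪q a, q b - q a⟫ else 0))
      = ∑ a : Fin N, ∑ b : Fin N,
        (if a ≠ b then -(G * m a * m b / ‖q a - q b‖) else 0) := by
    nth_rewrite 2 [hcopy]
    rw [← Finset.sum_add_distrib]
    refine Finset.sum_congr rfl fun a _ => ?_
    rw [← Finset.sum_add_distrib]
    refine Finset.sum_congr rfl fun b _ => ?_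
    by_cases hab : a = b
    · simp [hab]
    · rw [if_pos (Ne.symm hab), if_pos hab, if_pos hab]
      have hxy : q a ≠ q b := hcf a b hab
      have hp := pair_inner_eq hxy (G * m a * m b)
      have hc : G * m b * m a = G * m a * m b := by ring
      rw [hc]
      convert hp using 3
  have hW : (∑ a : Fin N, ∑ b : Fin N,
        (if a ≠ b then -(G * m a * m b / ‖q a - q b‖) else 0))
      = -(2 * potU G m q) := by
    have h4 : ∀ a b : Fin N, (if a ≠ b then -(G * m a * m b / ‖q a - q b‖) else 0)
        = -(if a ≠ b then G * m a * m b / ‖q a - q b‖ else 0) := by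
      intro a b; split <;> simp
    simp only [h4, Finset.sum_neg_distrib]
    have := potU_eq_half G m q
    linarith
  rw [hW] at h2
  linarith

end Aux

/-- Virial theorem for bounded solutions: if a solution defined
for all time has bounded moment of inertia, then the time averages of `K` and
`U` exist and satisfy `2⟨K⟩ = ⟨U⟩ = -2E`, and the energy `E` is negative. -/


theorem virial_bounded
    (N : ℕ) (hN : 2 ≤ N) (G : ℝ) (hG : 0 < G)
    (m : Fin N → ℝ) (hm : ∀ a, 0 < m a)
    (q v : ℝ → Config N)
    (hsol : IsSolutionOn G m Set.univ q v)
    (E : ℝ) (hE : ∀ t : ℝ, kinE m (v t) - potU G m (q t) = E)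
    (hbdd : ∃ M : ℝ, ∀ t : ℝ, momI m (q t) ≤ M) :
    Tendsto (fun T : ℝ => (1 / (2 * T)) * ∫ t in (-T)..T, kinE m (v t))
      atTop (nhds (-E)) ∧
    Tendsto (fun T : ℝ => (1 / (2 * T)) * ∫ t in (-T)..T, potU G m (q t))
      atTop (nhds (-2 * E)) ∧
    E < 0 := by
  obtain ⟨M, hM⟩ := hbdd
  have hs := fun t => hsol t (Set.mem_univ t)
  have hcf : ∀ t, CollisionFree (q t) := fun t => (hs t).1
  have hqd : ∀ t a, HasDerivAt (fun s => q s a) (v t a) t := fun t => (hs t).2.1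
  choose acc haccd haccF using fun t => (hs t).2.2
  set D : ℝ → ℝ := fun t => ∑ a : Fin N, (2 * m a) * ⟪q t a, v t a⟫ with hDdef
  -- derivative of the moment of inertia
  have hI' : ∀ t, HasDerivAt (fun s => momI m (q s)) (D t) t := by
    intro t
    have hterm : ∀ a : Fin N, HasDerivAt (fun s => m a * ‖q s a‖ ^ 2)
        ((2 * m a) * ⟪q t a, v t a⟫) t := by
      intro a
      have h1 := HasDerivAt.inner ℝ (hqd t a) (hqd t a)
      have h2 : HasDerivAt (fun s => ‖q s a‖ ^ 2) (2 * ⟪q t a, v t a⟫) t := by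
        have he : (fun s => ‖q s a‖ ^ 2) = fun s => ⟪q s a, q s a⟫ := by
          funext s; rw [real_inner_self_eq_norm_sq]
        rw [he]
        exact h1.congr_deriv (by rw [real_inner_comm (v t a) (q t a)]; ring)
      have h3 := h2.const_mul (m a)
      exact h3.congr_deriv (by ring)
    have hsum := HasDerivAt.fun_sum (fun a (_ : a ∈ univ) => hterm a)
    unfold momI
    exact hsum
  -- derivative of D
  have hKpos : ∀ t, 0 ≤ kinE m (v t) := by
    intro t
    unfold kinE
    have : (0:ℝ) ≤ ∑ a : Fin N, m a * ‖v t a‖ ^ 2 :=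
      Finset.sum_nonneg fun a _ => mul_nonneg (hm a).le (sq_nonneg _)
    linarith
  have hD' : ∀ t, HasDerivAt D (2 * kinE m (v t) + 2 * E) t := by
    intro t
    have hterm : ∀ a : Fin N, HasDerivAt (fun s => (2 * m a) * ⟪q s a, v s a⟫)
        ((2 * m a) * (⟪q t a, acc t a⟫ + ⟪v t a, v t a⟫)) t := fun a =>
      (HasDerivAt.inner ℝ (hqd t a) (haccd t a)).const_mul (2 * m a)
    have hsum := HasDerivAt.fun_sum (fun a (_ : a ∈ univ) => hterm a)
    have hval : (∑ a : Fin N, (2 * m a) * (⟪q t a, acc t a⟫ + ⟪v t a, v t a⟫))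
        = 2 * kinE m (v t) + 2 * E := by
      have e1 : ∀ a : Fin N, (2 * m a) * (⟪q t a, acc t a⟫ + ⟪v t a, v t a⟫)
          = 2 * ⟪q t a, m a • acc t a⟫ + 2 * (m a * ‖v t a‖ ^ 2) := by
        intro a
        rw [real_inner_smul_right, real_inner_self_eq_norm_sq]
        ring
      simp only [e1, Finset.sum_add_distrib]
      have e3 : (∑ a : Fin N, 2 * ⟪q t a, m a • acc t a⟫) = 2 * (- potU G m (q t)) := by
        rw [← Finset.mul_sum]
        congr 1
        calc (∑ a : Fin N, ⟪q t a, m a • acc t a⟫)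
            = ∑ a : Fin N, ⟪q t a, ∑ b ∈ univ.filter (fun b => b ≠ a),
                (G * m a * m b / ‖q t b - q t a‖ ^ 3) • (q t b - q t a)⟫ :=
              Finset.sum_congr rfl fun a _ => by rw [haccF t a]
          _ = - potU G m (q t) := virial_inner_eq G m (q t) (hcf t)
      rw [e3, ← Finset.mul_sum]
      have hEt := hE t
      unfold kinE at hEt ⊢
      linarith
    rw [← hval]
    exact hsum
  -- boundedness of D
  have hI0 : ∀ t, 0 ≤ momI m (q t) := by
    intro t
    exact Finset.sum_nonneg fun a _ => mul_nonneg (hm a).le (sq_nonneg _)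
  have hDb : ∀ t, |D t| ≤ M + 2 * |E| := by
    apply bounded_deriv_of_bounded (fun t => momI m (q t)) D
      (fun t => 2 * kinE m (v t) + 2 * E) (2 * |E|) M (by positivity) hI' hD'
      (fun t => by show -(2 * |E|) ≤ 2 * kinE m (v t) + 2 * E; have := hKpos t; have := neg_abs_le E; linarith) hI0 hM
  -- continuity and integrability of K
  have hvc : ∀ a, Continuous (fun t => v t a) := fun a =>
    continuous_iff_continuousAt.2 fun t => (haccd t a).differentiableAt.continuousAt
  have hKc : Continuous (fun t => kinE m (v t)) := by
    unfold kinE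
    apply Continuous.mul continuous_const
    apply continuous_finset_sum
    intro a _
    exact continuous_const.mul (((hvc a).norm).pow 2)
  have hKint : ∀ a b : ℝ, IntervalIntegrable (fun t => kinE m (v t)) volume a b :=
    fun a b => hKc.intervalIntegrable a b
  -- FTC
  have hftc : ∀ T : ℝ, ∫ t in (-T)..T, (2 * kinE m (v t) + 2 * E) = D T - D (-T) :=
    fun T => intervalIntegral.integral_eq_sub_of_hasDerivAt (fun x _ => hD' x)
      (((continuous_const.mul hKc).add continuous_const).intervalIntegrable _ _)
  have hKI : ∀ T : ℝ, ∫ t in (-T)..T, kinE m (v t) = (D T - D (-T)) / 2 - 2 * E * T := by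
    intro T
    have h1 : ∫ t in (-T)..T, (2 * kinE m (v t) + 2 * E)
        = 2 * (∫ t in (-T)..T, kinE m (v t)) + (T - (-T)) * (2 * E) := by
      rw [intervalIntegral.integral_add ((hKint _ _).const_mul 2)
        (continuous_const.intervalIntegrable _ _), intervalIntegral.integral_const_mul,
        intervalIntegral.integral_const, smul_eq_mul]
    have h2 := hftc T
    rw [h1] at h2
    linarith
  -- the boundary term tends to zero
  have hzero : Tendsto (fun T : ℝ => (D T - D (-T)) / (4 * T)) atTop (nhds 0) := by
    apply squeeze_zero_norm' (a := fun T : ℝ => (2 * (M + 2 * |E|)) / (4 * T))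
    · filter_upwards [eventually_ge_atTop (1:ℝ)] with T hT
      rw [Real.norm_eq_abs, abs_div]
      have h4 : |4 * T| = 4 * T := abs_of_pos (by linarith)
      rw [h4]
      apply div_le_div_of_nonneg_right ?_ (by linarith)
      calc |D T - D (-T)| ≤ |D T| + |D (-T)| := abs_sub _ _
        _ ≤ 2 * (M + 2 * |E|) := by linarith [hDb T, hDb (-T)]
    · exact Tendsto.div_atTop tendsto_const_nhds
        (Tendsto.const_mul_atTop (by norm_num) tendsto_id)
  -- the K limit
  have hTK : Tendsto (fun T : ℝ => (1 / (2 * T)) * ∫ t in (-T)..T, kinE m (v t))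
      atTop (nhds (-E)) := by
    have heq : (fun T : ℝ => (D T - D (-T)) / (4 * T) + (-E)) =ᶠ[atTop]
        (fun T : ℝ => (1 / (2 * T)) * ∫ t in (-T)..T, kinE m (v t)) := by
      filter_upwards [eventually_gt_atTop (0:ℝ)] with T hT
      rw [hKI T]
      field_simp
      ring
    have h5 : Tendsto (fun T : ℝ => (D T - D (-T)) / (4 * T) + (-E)) atTop
        (nhds (0 + (-E))) := hzero.add tendsto_const_nhds
    rw [zero_add] at h5
    exact h5.congr' heq
  -- the U limit
  have hUK : (fun t => potU G m (q t)) = fun t => kinE m (v t) - E := by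
    funext t; linarith [hE t]
  have hUc : Continuous (fun t => potU G m (q t)) := by
    rw [hUK]; exact hKc.sub continuous_const
  have hUI : ∀ T : ℝ, ∫ t in (-T)..T, potU G m (q t)
      = (∫ t in (-T)..T, kinE m (v t)) - (T - (-T)) * E := by
    intro T
    have h6 : ∫ t in (-T)..T, potU G m (q t) = ∫ t in (-T)..T, (kinE m (v t) - E) := by
      apply intervalIntegral.integral_congr
      intro t _
      simp only
      linarith [hE t]
    rw [h6, intervalIntegral.integral_sub (hKint _ _)
      (continuous_const.intervalIntegrable _ _), intervalIntegral.integral_const,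
      smul_eq_mul]
  have hTU : Tendsto (fun T : ℝ => (1 / (2 * T)) * ∫ t in (-T)..T, potU G m (q t))
      atTop (nhds (-2 * E)) := by
    have heq : (fun T : ℝ => ((1 / (2 * T)) * ∫ t in (-T)..T, kinE m (v t)) - E) =ᶠ[atTop]
        (fun T : ℝ => (1 / (2 * T)) * ∫ t in (-T)..T, potU G m (q t)) := by
      filter_upwards [eventually_gt_atTop (0:ℝ)] with T hT
      have h12 : (1 / (2 * T)) * ((T - -T) * E) = E := by
        have he : T - -T = 2 * T := by ring
        rw [he, ← mul_assoc, one_div, inv_mul_cancel₀ (by positivity), one_mul]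
      rw [hUI T, mul_sub, h12]
    have h5 : Tendsto (fun T : ℝ => ((1 / (2 * T)) * ∫ t in (-T)..T, kinE m (v t)) - E)
        atTop (nhds (-E - E)) := hTK.sub tendsto_const_nhds
    have h7 : -E - E = -2 * E := by ring
    rw [h7] at h5
    exact h5.congr' heq
  -- a uniform positive lower bound for U
  have h2N : (1 : ℕ) < N := by omega
  set a0 : Fin N := ⟨0, by omega⟩ with ha0
  set a1 : Fin N := ⟨1, by omega⟩ with ha1
  have ha01 : a0 ≠ a1 := by simp [ha0, ha1, Fin.ext_iff]
  have h01lt : a0 < a1 := by simp [ha0, ha1, Fin.lt_def]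
  have hq_bound : ∀ t a, ‖q t a‖ ≤ Real.sqrt (M / m a) := by
    intro t a
    have h1 : m a * ‖q t a‖ ^ 2 ≤ M := by
      have h8 : m a * ‖q t a‖ ^ 2 ≤ ∑ i : Fin N, m i * ‖q t i‖ ^ 2 :=
        Finset.single_le_sum (f := fun i => m i * ‖q t i‖ ^ 2)
          (fun i _ => mul_nonneg (hm i).le (sq_nonneg _)) (mem_univ a)
      have h8' := hM t
      unfold momI at h8'
      linarith
    have h9 : ‖q t a‖ ^ 2 ≤ M / m a := by
      rw [le_div_iff₀ (hm a)]
      linarith [mul_comm (m a) (‖q t a‖ ^ 2)]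
    calc ‖q t a‖ = Real.sqrt (‖q t a‖ ^ 2) := (Real.sqrt_sq (norm_nonneg _)).symm
      _ ≤ Real.sqrt (M / m a) := Real.sqrt_le_sqrt h9
  set R : ℝ := Real.sqrt (M / m a0) + Real.sqrt (M / m a1) with hR
  have hRpos : 0 < R := by
    rcases lt_or_ge 0 R with h | h
    · exact h
    · exfalso
      rw [hR] at h
      have e0 : ‖q 0 a0‖ ≤ 0 := le_trans (hq_bound 0 a0)
        (by have := Real.sqrt_nonneg (M / m a1); linarith)
      have e1 : ‖q 0 a1‖ ≤ 0 := le_trans (hq_bound 0 a1)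
        (by have := Real.sqrt_nonneg (M / m a0); linarith)
      have z0 : q 0 a0 = 0 := norm_le_zero_iff.1 e0
      have z1 : q 0 a1 = 0 := norm_le_zero_iff.1 e1
      exact hcf 0 a0 a1 ha01 (z0.trans z1.symm)
  have hrpos : ∀ t, 0 < ‖q t a0 - q t a1‖ := fun t =>
    norm_pos_iff.2 (sub_ne_zero.2 (hcf t a0 a1 ha01))
  have hrle : ∀ t, ‖q t a0 - q t a1‖ ≤ R := by
    intro t
    calc ‖q t a0 - q t a1‖ ≤ ‖q t a0‖ + ‖q t a1‖ := norm_sub_le _ _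
      _ ≤ R := add_le_add (hq_bound t a0) (hq_bound t a1)
  have hU_lb : ∀ t, G * (m a0 * m a1) / R ≤ potU G m (q t) := by
    intro t
    have hterm : G * (m a0 * m a1) / R ≤ G * (m a0 * m a1 / ‖q t a0 - q t a1‖) := by
      rw [mul_div_assoc]
      apply mul_le_mul_of_nonneg_left ?_ hG.le
      apply div_le_div_of_nonneg_left (mul_pos (hm a0) (hm a1)).le (hrpos t) (hrle t)
    have hnn : ∀ a b : Fin N,
        0 ≤ (if a < b then m a * m b / ‖q t a - q t b‖ else 0) := by
      intro a b
      split
      · exact div_nonneg (mul_nonneg (hm a).le (hm b).le) (norm_nonneg _)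
      · exact le_refl 0
    have h1 : m a0 * m a1 / ‖q t a0 - q t a1‖
        ≤ ∑ a : Fin N, ∑ b : Fin N, (if a < b then m a * m b / ‖q t a - q t b‖ else 0) := by
      calc m a0 * m a1 / ‖q t a0 - q t a1‖
          = (if a0 < a1 then m a0 * m a1 / ‖q t a0 - q t a1‖ else 0) := by rw [if_pos h01lt]
        _ ≤ ∑ b : Fin N, (if a0 < b then m a0 * m b / ‖q t a0 - q t b‖ else 0) :=
            Finset.single_le_sum (fun b _ => hnn a0 b) (mem_univ a1)
        _ ≤ ∑ a : Fin N, ∑ b : Fin N, (if a < b then m a * m b / ‖q t a - q t b‖ else 0) :=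
            Finset.single_le_sum (fun a _ => Finset.sum_nonneg fun b _ => hnn a b)
              (mem_univ a0)
    calc G * (m a0 * m a1) / R ≤ G * (m a0 * m a1 / ‖q t a0 - q t a1‖) := hterm
      _ ≤ potU G m (q t) := mul_le_mul_of_nonneg_left h1 hG.le
  have hdpos : 0 < G * (m a0 * m a1) / R :=
    div_pos (mul_pos hG (mul_pos (hm a0) (hm a1))) hRpos
  -- conclude E < 0
  have hEneg : G * (m a0 * m a1) / R ≤ -2 * E := by
    apply ge_of_tendsto hTU
    filter_upwards [eventually_ge_atTop (1:ℝ)] with T hT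
    have hTpos : (0:ℝ) < T := by linarith
    have hint : (T - (-T)) * (G * (m a0 * m a1) / R) ≤ ∫ t in (-T)..T, potU G m (q t) := by
      have := intervalIntegral.integral_mono_on (μ := volume) (by linarith : (-T) ≤ T)
        ((continuous_const : Continuous fun _ : ℝ => G * (m a0 * m a1) / R).intervalIntegrable _ _)
        (hUc.intervalIntegrable _ _) (fun t _ => hU_lb t)
      rwa [intervalIntegral.integral_const, smul_eq_mul] at this
    have h10 : (0:ℝ) < 1 / (2 * T) := by positivity
    have h12 : ∀ X : ℝ, (1 / (2 * T)) * ((T - -T) * X) = X := by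
      intro X
      have he : T - -T = 2 * T := by ring
      rw [he, ← mul_assoc, one_div, inv_mul_cancel₀ (by positivity), one_mul]
    calc G * (m a0 * m a1) / R
        = (1 / (2 * T)) * ((T - (-T)) * (G * (m a0 * m a1) / R)) := (h12 _).symm
      _ ≤ (1 / (2 * T)) * ∫ t in (-T)..T, potU G m (q t) :=
          mul_le_mul_of_nonneg_left hint h10.le
  exact ⟨hTK, hTU, by linarith⟩
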